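/- There exists a constant C (depending only on L) such that for all integers N ≥ L and all a ∈ [0,1], |(Na)_L / (N)_L - a^L| ≤ C·a/N. -/

import Mathlib

lemma abs_prod_sub_prod_le (n : ℕ) (f g : ℕ → ℝ) (M : ℝ) (hM : 1 ≤ M)
    (hf : ∀ i ∈ Finset.range n, |f i| ≤ M) (hg : ∀ i ∈ Finset.range n, |g i| ≤ M) :
    |∏ i ∈ Finset.range n, f i - ∏ i ∈ Finset.range n, g i| ≤
      M ^ n * ∑ i ∈ Finset.range n, |f i - g i| := by
  induction n with
  | zero => simp
  | succ n ih =>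
    have hf' : ∀ i ∈ Finset.range n, |f i| ≤ M := fun i hi =>
      hf i (Finset.mem_range.2 (Nat.lt_succ_of_lt (Finset.mem_range.1 hi)))
    have hg' : ∀ i ∈ Finset.range n, |g i| ≤ M := fun i hi =>
      hg i (Finset.mem_range.2 (Nat.lt_succ_of_lt (Finset.mem_range.1 hi)))
    have ih' := ih hf' hg'
    have hMn : (0:ℝ) ≤ M ^ n := by positivity
    have hQ : |∏ i ∈ Finset.range n, g i| ≤ M ^ n := by
      rw [Finset.abs_prod]
      calc ∏ i ∈ Finset.range n, |g i| ≤ ∏ i ∈ Finset.range n, M :=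
            Finset.prod_le_prod (fun i _ => abs_nonneg _) (fun i hi => hg' i hi)
        _ = M ^ n := by simp
    have hfn : |f n| ≤ M := hf n (Finset.self_mem_range_succ n)
    have hsum_nonneg : 0 ≤ ∑ i ∈ Finset.range n, |f i - g i| :=
      Finset.sum_nonneg fun i _ => abs_nonneg _
    rw [Finset.prod_range_succ, Finset.prod_range_succ, Finset.sum_range_succ]
    have key : (∏ i ∈ Finset.range n, f i) * f n - (∏ i ∈ Finset.range n, g i) * g n
        = (∏ i ∈ Finset.range n, f i - ∏ i ∈ Finset.range n, g i) * f n
          + (∏ i ∈ Finset.range n, g i) * (f n - g n) := by ring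
    rw [key]
    calc |(∏ i ∈ Finset.range n, f i - ∏ i ∈ Finset.range n, g i) * f n
          + (∏ i ∈ Finset.range n, g i) * (f n - g n)|
        ≤ |∏ i ∈ Finset.range n, f i - ∏ i ∈ Finset.range n, g i| * |f n|
          + |∏ i ∈ Finset.range n, g i| * |f n - g n| := by
          calc _ ≤ |(∏ i ∈ Finset.range n, f i - ∏ i ∈ Finset.range n, g i) * f n|
                + |(∏ i ∈ Finset.range n, g i) * (f n - g n)| := abs_add_le _ _
            _ = _ := by rw [abs_mul, abs_mul]
      _ ≤ (M ^ n * ∑ i ∈ Finset.range n, |f i - g i|) * M + M ^ n * |f n - g n| :=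
          add_le_add
            (mul_le_mul ih' hfn (abs_nonneg _) (by positivity))
            (mul_le_mul_of_nonneg_right hQ (abs_nonneg _))
      _ ≤ M ^ (n + 1) * (∑ i ∈ Finset.range n, |f i - g i| + |f n - g n|) := by
          rw [pow_succ]
          nlinarith [mul_nonneg (mul_nonneg hMn (abs_nonneg (f n - g n))) (sub_nonneg.2 hM)]

/-- The falling factorial `x(x-1)⋯(x-k+1)` of a real number. -/
def fallingFactorial (x : ℝ) (k : ℕ) : ℝ := ∏ i ∈ Finset.range k, (x - i)

/-- There is a constant `C` (depending only on `L`) such that for all `N ≥ L` and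
`a ∈ [0,1]`, `|(Na)_L/(N)_L - a^L| ≤ C a / N`. -/
theorem fallingFactorial_ratio_error (L : ℕ) (hL : 1 ≤ L) :
    ∃ C : ℝ, ∀ N : ℕ, L ≤ N → ∀ a : ℝ, a ∈ Set.Icc (0 : ℝ) 1 →
      |fallingFactorial ((N : ℝ) * a) L / fallingFactorial (N : ℝ) L - a ^ L| ≤
        C * a / N := by
  obtain ⟨L', rfl⟩ : ∃ L', L = L' + 1 := ⟨L - 1, (Nat.succ_pred_eq_of_pos hL).symm⟩
  set M : ℝ := 1 + ((L' : ℝ) + 1) ^ 2 with hMdef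
  have hM : (1:ℝ) ≤ M := le_add_of_nonneg_right (by positivity)
  refine ⟨M ^ (L' + 1) * ((L' : ℝ) + 1) ^ 3, ?_⟩
  intro N hN a ha
  obtain ⟨ha0, ha1⟩ := ha
  have hNL : ((L' : ℝ) + 1) ≤ (N : ℝ) := by exact_mod_cast hN
  have hN1 : (1:ℝ) ≤ (N : ℝ) := by
    have : (0:ℝ) ≤ (L' : ℝ) := Nat.cast_nonneg _
    linarith
  have hNpos : (0:ℝ) < (N : ℝ) := by linarith
  have hNne : (N : ℝ) ≠ 0 := ne_of_gt hNpos
  -- the term function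
  set h : ℕ → ℝ := fun i => ((N : ℝ) * a - i) / ((N : ℝ) - i) with hhdef
  have hratio : fallingFactorial ((N : ℝ) * a) (L' + 1) / fallingFactorial (N : ℝ) (L' + 1)
      = ∏ i ∈ Finset.range (L' + 1), h i := by
    rw [fallingFactorial, fallingFactorial, ← Finset.prod_div_distrib]
  have hsplit : ∏ i ∈ Finset.range (L' + 1), h i
      = (∏ i ∈ Finset.range L', h (i + 1)) * a := by
    rw [Finset.prod_range_succ']
    congr 1
    simp only [hhdef, Nat.cast_zero, sub_zero]
    field_simp
  -- per-term difference bound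
  have hdiff : ∀ i ∈ Finset.range L', |h (i + 1) - a| ≤ ((L' : ℝ) + 1) ^ 2 / N := by
    intro i hi
    have hiL : (i : ℝ) + 1 ≤ (L' : ℝ) := by
      exact_mod_cast Nat.succ_le_of_lt (Finset.mem_range.1 hi)
    have hd : (0:ℝ) < (N : ℝ) - ((i : ℝ) + 1) := by linarith
    have heq : h (i + 1) - a = (((i : ℝ) + 1) * (a - 1)) / ((N : ℝ) - ((i : ℝ) + 1)) := by
      simp only [hhdef]
      push_cast
      field_simp
      ring
    rw [heq, abs_div, abs_of_pos hd, abs_mul]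
    rw [abs_of_nonneg (by positivity : (0:ℝ) ≤ (i : ℝ) + 1),
      abs_of_nonpos (by linarith : a - 1 ≤ 0)]
    rw [div_le_div_iff₀ hd hNpos]
    nlinarith [mul_nonneg (by positivity : (0:ℝ) ≤ (i : ℝ) + 1) (by linarith : (0:ℝ) ≤ 1 - a),
      mul_le_mul_of_nonneg_right hiL (by linarith : (0:ℝ) ≤ 1 - a),
      mul_nonneg (Nat.cast_nonneg L' : (0:ℝ) ≤ L') (by linarith : (0:ℝ) ≤ (N:ℝ) - ((L':ℝ)+1))]
  -- term bounds
  have hLN : ((L' : ℝ) + 1) ^ 2 / N ≤ ((L' : ℝ) + 1) ^ 2 := by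
    apply div_le_self (by positivity) hN1
  have hfbd : ∀ i ∈ Finset.range L', |h (i + 1)| ≤ M := by
    intro i hi
    have h1 : |h (i + 1)| ≤ |h (i + 1) - a| + |a| := by
      calc |h (i + 1)| = |(h (i + 1) - a) + a| := by ring_nf
        _ ≤ |h (i + 1) - a| + |a| := abs_add_le _ _
    have h2 := hdiff i hi
    rw [abs_of_nonneg ha0] at h1
    rw [hMdef]; linarith
  have hgbd : ∀ i ∈ Finset.range L', |(fun _ : ℕ => a) i| ≤ M := by
    intro i _
    simp only
    rw [abs_of_nonneg ha0]; rw [hMdef]; nlinarith [sq_nonneg ((L':ℝ)+1)]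
  have main := abs_prod_sub_prod_le L' (fun i => h (i + 1)) (fun _ => a) M hM hfbd hgbd
  simp only [Finset.prod_const, Finset.card_range] at main
  have hsum : ∑ i ∈ Finset.range L', |h (i + 1) - a| ≤ (L' : ℝ) * (((L' : ℝ) + 1) ^ 2 / N) := by
    calc ∑ i ∈ Finset.range L', |h (i + 1) - a|
        ≤ ∑ _i ∈ Finset.range L', ((L' : ℝ) + 1) ^ 2 / N := Finset.sum_le_sum hdiff
      _ = (L' : ℝ) * (((L' : ℝ) + 1) ^ 2 / N) := by
          rw [Finset.sum_const, Finset.card_range, nsmul_eq_mul]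
  have hstep : |(∏ i ∈ Finset.range L', h (i + 1)) - a ^ L'|
      ≤ (M ^ (L' + 1) * ((L' : ℝ) + 1) ^ 3) / N := by
    calc |(∏ i ∈ Finset.range L', h (i + 1)) - a ^ L'|
        ≤ M ^ L' * ∑ i ∈ Finset.range L', |h (i + 1) - a| := main
      _ ≤ M ^ L' * ((L' : ℝ) * (((L' : ℝ) + 1) ^ 2 / N)) := by
          apply mul_le_mul_of_nonneg_left hsum (by positivity)
      _ = (M ^ L' * ((L' : ℝ) * ((L' : ℝ) + 1) ^ 2)) / N := by ring
      _ ≤ (M ^ (L' + 1) * ((L' : ℝ) + 1) ^ 3) / N := by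
          have hp : M ^ L' ≤ M ^ (L' + 1) := pow_le_pow_right₀ (by linarith) (Nat.le_succ L')
          have hq : (L' : ℝ) * ((L' : ℝ) + 1) ^ 2 ≤ ((L' : ℝ) + 1) ^ 3 := by
            nlinarith [sq_nonneg ((L' : ℝ) + 1)]
          have hnum : M ^ L' * ((L' : ℝ) * ((L' : ℝ) + 1) ^ 2)
              ≤ M ^ (L' + 1) * ((L' : ℝ) + 1) ^ 3 := by
            have h0 : (0:ℝ) ≤ (L' : ℝ) * ((L' : ℝ) + 1) ^ 2 := by positivity
            have h1 : (0:ℝ) ≤ M ^ (L' + 1) := by positivity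
            exact mul_le_mul hp hq h0 h1
          exact (div_le_div_iff_of_pos_right hNpos).mpr hnum
  rw [hratio, hsplit, pow_succ]
  have : (∏ i ∈ Finset.range L', h (i + 1)) * a - a ^ L' * a
      = ((∏ i ∈ Finset.range L', h (i + 1)) - a ^ L') * a := by ring
  rw [this, abs_mul, abs_of_nonneg ha0]
  calc |(∏ i ∈ Finset.range L', h (i + 1)) - a ^ L'| * a
      ≤ ((M ^ (L' + 1) * ((L' : ℝ) + 1) ^ 3) / N) * a :=
        mul_le_mul_of_nonneg_right hstep ha0
    _ = M ^ (L' + 1) * ((L' : ℝ) + 1) ^ 3 * a / N := by ring
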